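/- There exists a pair of orthogonal 7-cycle decompositions of the graph K_21 \ K_7 (the complete graph on 21 vertices with the edges of a complete graph on a fixed set of 7 vertices removed): two partitions of the edge set of this graph into cycles of length 7 such that any cycle of the first partition and any cycle of the second partition share at most one edge. -/

import Mathlib

/-- A set of edges `C` forms a cycle of length `l`: there is a graph and a closed walk
which is a cycle, has length `l`, and whose edge set is exactly `C`. -/
def IsCycleEdgeSet {V : Type*} (l : ℕ) (C : Set (Sym2 V)) : Prop :=
  ∃ (G : SimpleGraph V) (x : V) (w : G.Walk x x),
    w.IsCycle ∧ w.length = l ∧ C = {e | e ∈ w.edges}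

/-- `D` is a decomposition of the edge set of `G` into cycles of length `l`:
each member of `D` is the edge set of an `l`-cycle contained in `G`, and every
edge of `G` lies in exactly one member of `D`. -/
def IsCycleDecomposition {V : Type*} (G : SimpleGraph V) (l : ℕ)
    (D : Set (Set (Sym2 V))) : Prop :=
  (∀ C ∈ D, IsCycleEdgeSet l C ∧ C ⊆ G.edgeSet) ∧
  (∀ e ∈ G.edgeSet, ∃! C, C ∈ D ∧ e ∈ C)

/-- Two cycle decompositions are orthogonal if any member of the first and any member
of the second share at most one edge. -/
def OrthogonalDecompositions {V : Type*} (D₁ D₂ : Set (Set (Sym2 V))) : Prop :=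
  ∀ C₁ ∈ D₁, ∀ C₂ ∈ D₂, (C₁ ∩ C₂).Subsingleton

def Gr : SimpleGraph (Fin 21) := SimpleGraph.fromRel (fun x y : Fin 21 => ¬((x : ℕ) < 7 ∧ (y : ℕ) < 7))

instance : DecidableRel Gr.Adj := fun x y =>
  decidable_of_iff (x ≠ y ∧ ¬((x : ℕ) < 7 ∧ (y : ℕ) < 7)) (by
    show _ ↔ (SimpleGraph.fromRel _).Adj x y
    rw [SimpleGraph.fromRel_adj]; tauto)

instance {u : Fin 21} (w : Gr.Walk u u) : Decidable w.IsCycle :=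
  decidable_of_iff (w.edges.Nodup ∧ w.length ≠ 0 ∧ w.support.tail.Nodup) (by
    rw [SimpleGraph.Walk.isCycle_def, SimpleGraph.Walk.isTrail_def, Ne,
      SimpleGraph.Walk.length_eq_zero_iff, SimpleGraph.Walk.nil_iff_eq_nil])

lemma adj_iff {x y : Fin 21} : Gr.Adj x y ↔ ((x:ℕ) ≠ (y:ℕ) ∧ ¬((x:ℕ) < 7 ∧ (y:ℕ) < 7)) := by
  show (SimpleGraph.fromRel _).Adj x y ↔ _
  rw [SimpleGraph.fromRel_adj]
  constructor
  · rintro ⟨hne, h | h⟩ <;> exact ⟨fun hv => hne (Fin.ext hv), by tauto⟩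
  · rintro ⟨hne, h⟩
    exact ⟨fun hv => hne (congrArg Fin.val hv), Or.inl h⟩

def pairsOf (L : List (Fin 21)) : List (Fin 21 × Fin 21) := L.zip (L.rotate 1)

def edgesList (L : List (Fin 21)) : List (Sym2 (Fin 21)) :=
  (pairsOf L).map fun p => s(p.1, p.2)

def cyc (L : List (Fin 21)) : Set (Sym2 (Fin 21)) := {e | e ∈ edgesList L}

lemma mem_cyc {e : Sym2 (Fin 21)} {L : List (Fin 21)} : e ∈ cyc L ↔ e ∈ edgesList L := Iff.rfl

lemma mem_edgesList_pair {x y : Fin 21} {L : List (Fin 21)} :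
    s(x, y) ∈ edgesList L ↔ (x, y) ∈ pairsOf L ∨ (y, x) ∈ pairsOf L := by
  simp only [edgesList, List.mem_map, Sym2.eq, Sym2.rel_iff', Prod.mk.injEq, Prod.swap_prod_mk]
  constructor
  · rintro ⟨⟨a, b⟩, hab, (⟨rfl, rfl⟩ | ⟨rfl, rfl⟩)⟩
    · exact Or.inl hab
    · exact Or.inr hab
  · rintro (h | h)
    · exact ⟨(x, y), h, Or.inl ⟨rfl, rfl⟩⟩
    · exact ⟨(y, x), h, Or.inr ⟨rfl, rfl⟩⟩

/-- canonical numeric encoding of an unordered pair -/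
def encr (a b : ℕ) : ℕ := if a ≤ b then 21 * a + b else 21 * b + a

def pairsN (L : List ℕ) : List ℕ := (L.zip (L.rotate 1)).map fun p => encr p.1 p.2

lemma pairsN_map (L : List (Fin 21)) :
    pairsN (L.map Fin.val) = (pairsOf L).map (fun p => encr p.1.val p.2.val) := by
  unfold pairsN pairsOf
  rw [← List.map_rotate, List.zip_map, List.map_map]
  rfl

lemma encr_inj_iff {x y z w : Fin 21} :
    encr x.val y.val = encr z.val w.val ↔ ((x = z ∧ y = w) ∨ (x = w ∧ y = z)) := by
  have hx := x.isLt; have hy := y.isLt; have hz := z.isLt; have hw := w.isLt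
  rw [Fin.ext_iff, Fin.ext_iff, Fin.ext_iff, Fin.ext_iff]
  unfold encr
  split <;> split <;> omega

lemma mem_pairsN_iff {x y : Fin 21} {L : List (Fin 21)} :
    encr x.val y.val ∈ pairsN (L.map Fin.val) ↔ ((x, y) ∈ pairsOf L ∨ (y, x) ∈ pairsOf L) := by
  rw [pairsN_map, List.mem_map]
  constructor
  · rintro ⟨p, hp, hpe⟩
    rcases encr_inj_iff.mp hpe with ⟨rfl, rfl⟩ | ⟨rfl, rfl⟩
    · exact Or.inl hp
    · exact Or.inr hp
  · rintro (h | h)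
    · exact ⟨(x, y), h, rfl⟩
    · exact ⟨(y, x), h, encr_inj_iff.mpr (Or.inr ⟨rfl, rfl⟩)⟩

lemma adj_of_code {x y : Fin 21} (h1 : encr x.val y.val / 21 ≠ encr x.val y.val % 21)
    (h2 : 7 ≤ encr x.val y.val % 21) : Gr.Adj x y := by
  have hx := x.isLt; have hy := y.isLt
  rw [adj_iff]
  unfold encr at h1 h2
  split at h1 <;> split at h2 <;> omega

lemma code_of_adj {x y : Fin 21} (h : Gr.Adj x y) :
    encr x.val y.val / 21 ≠ encr x.val y.val % 21 ∧ 7 ≤ encr x.val y.val % 21 := by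
  have hx := x.isLt; have hy := y.isLt
  rw [adj_iff] at h
  unfold encr
  split <;> omega

def refE : List ℕ :=
  (List.range 21).flatMap fun b => ((List.range 21).filter fun a => decide (b < a ∧ 7 ≤ a)).map
    fun a => 21 * b + a

lemma mem_refE_of_adj {x y : Fin 21} (h : Gr.Adj x y) : encr x.val y.val ∈ refE := by
  have hx := x.isLt; have hy := y.isLt
  rw [adj_iff] at h
  unfold refE
  rw [List.mem_flatMap]
  rcases Nat.lt_or_ge x.val y.val with hlt | hge
  · refine ⟨x.val, List.mem_range.mpr hx, ?_⟩
    rw [List.mem_map]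
    refine ⟨y.val, List.mem_filter.mpr ⟨List.mem_range.mpr hy, decide_eq_true ⟨hlt, by omega⟩⟩, ?_⟩
    unfold encr; rw [if_pos (Nat.le_of_lt hlt)]
  · have hlt : y.val < x.val := by omega
    refine ⟨y.val, List.mem_range.mpr hy, ?_⟩
    rw [List.mem_map]
    refine ⟨x.val, List.mem_filter.mpr ⟨List.mem_range.mpr hx, decide_eq_true ⟨hlt, by omega⟩⟩, ?_⟩
    unfold encr; rw [if_neg (by omega)]

lemma countP_eq_sum_count {m : ℕ} : ∀ (li : List (List ℕ)),
    (∀ l ∈ li, List.count m l ≤ 1) →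
    li.countP (fun l => decide (m ∈ l)) = (li.map (List.count m)).sum
  | [], _ => rfl
  | l :: li, h => by
    have hl := h l List.mem_cons_self
    have ih := countP_eq_sum_count li (fun l' hl' => h l' (List.mem_cons_of_mem l hl'))
    rw [List.countP_cons, List.map_cons, List.sum_cons, ih]
    by_cases hm : m ∈ l
    · have hc : List.count m l = 1 := le_antisymm hl (List.count_pos_iff.mpr hm)
      rw [decide_eq_true hm, if_pos rfl, hc]
      omega
    · rw [decide_eq_false hm, if_neg Bool.false_ne_true, List.count_eq_zero_of_not_mem hm]
      omega

lemma exists_unique_filter {α : Type*} (l : List α) (p : α → Prop) [DecidablePred p]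
    (h : l.countP (fun a => decide (p a)) = 1) :
    ∃ a ∈ l, p a ∧ ∀ b ∈ l, p b → b = a := by
  rw [List.countP_eq_length_filter] at h
  obtain ⟨x, hx⟩ := List.length_eq_one_iff.mp h
  have hxmem : x ∈ l.filter (fun a => decide (p a)) := by rw [hx]; simp
  rw [List.mem_filter] at hxmem
  refine ⟨x, hxmem.1, of_decide_eq_true hxmem.2, fun b hb hpb => ?_⟩
  have : b ∈ l.filter (fun a => decide (p a)) := List.mem_filter.mpr ⟨hb, decide_eq_true hpb⟩
  rw [hx, List.mem_singleton] at this
  exact this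

lemma eq_of_countP_le_one {α : Type*} (l : List α) (p : α → Prop) [DecidablePred p]
    (h : l.countP (fun a => decide (p a)) ≤ 1) {a b : α}
    (ha : a ∈ l) (hpa : p a) (hb : b ∈ l) (hpb : p b) : a = b := by
  rw [List.countP_eq_length_filter] at h
  have ha' : a ∈ l.filter (fun a => decide (p a)) := List.mem_filter.mpr ⟨ha, decide_eq_true hpa⟩
  have hb' : b ∈ l.filter (fun a => decide (p a)) := List.mem_filter.mpr ⟨hb, decide_eq_true hpb⟩
  match hf : l.filter (fun a => decide (p a)), h, ha', hb' with
  | [x], _, ha', hb' =>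
    rw [List.mem_singleton] at ha' hb'; rw [ha', hb']

lemma decompN (cycles : List (List (Fin 21))) (pN : List (List ℕ)) (E : List ℕ)
    (hpN : pN = cycles.map (fun L => pairsN (L.map Fin.val)))
    (hcyc : ∀ L ∈ cycles, IsCycleEdgeSet 7 (cyc L))
    (hcode : ∀ l ∈ pN, ∀ m ∈ l, m / 21 ≠ m % 21 ∧ 7 ≤ m % 21)
    (hnd : ∀ l ∈ pN, l.Nodup)
    (hcnt1 : ∀ m ∈ E, pN.flatten.count m = 1)
    (hE : refE = E) :
    (∀ C ∈ {C | ∃ L ∈ cycles, C = cyc L}, IsCycleEdgeSet 7 C ∧ C ⊆ Gr.edgeSet) ∧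
    (∀ e ∈ Gr.edgeSet, ∃! C, C ∈ {C | ∃ L ∈ cycles, C = cyc L} ∧ e ∈ C) := by
  have adjp : ∀ L ∈ cycles, ∀ p ∈ pairsOf L, Gr.Adj p.1 p.2 := by
    intro L hL p hp
    have hm : encr p.1.val p.2.val ∈ pairsN (L.map Fin.val) := by
      apply mem_pairsN_iff.mpr (Or.inl _)
      exact hp
    have hmem : pairsN (L.map Fin.val) ∈ pN := hpN ▸ List.mem_map_of_mem (f := fun L => pairsN (L.map Fin.val)) hL
    obtain ⟨h1, h2⟩ := hcode _ hmem _ hm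
    exact adj_of_code h1 h2
  constructor
  · rintro C ⟨L, hL, rfl⟩
    refine ⟨hcyc L hL, fun e he => ?_⟩
    rw [mem_cyc] at he
    simp only [edgesList, List.mem_map] at he
    obtain ⟨p, hp, rfl⟩ := he
    exact Gr.mem_edgeSet.mpr (adjp L hL p hp)
  · intro e he
    induction e using Sym2.ind with
    | _ x y =>
    rw [Gr.mem_edgeSet] at he
    have hmE : encr x.val y.val ∈ E := hE ▸ mem_refE_of_adj he
    have hcnt : pN.flatten.count (encr x.val y.val) = 1 := hcnt1 _ hmE
    have hsum : (pN.map (List.count (encr x.val y.val))).sum = 1 := by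
      rw [← List.count_flatten]; exact hcnt
    have hle : ∀ l ∈ pN, List.count (encr x.val y.val) l ≤ 1 := fun l hl =>
      List.nodup_iff_count_le_one.mp (hnd l hl) _
    have hcp : pN.countP (fun l => decide (encr x.val y.val ∈ l)) = 1 :=
      (countP_eq_sum_count pN hle).trans hsum
    have hcp2 : cycles.countP
        (fun L => decide ((x, y) ∈ pairsOf L ∨ (y, x) ∈ pairsOf L)) = 1 := by
      rw [hpN, List.countP_map] at hcp
      rw [← hcp]
      apply List.countP_congr
      intro L hL
      simp only [Function.comp, decide_eq_true_eq]
      exact mem_pairsN_iff.symm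
    obtain ⟨L, hL, hpL, huniq⟩ := exists_unique_filter cycles
      (fun L => (x, y) ∈ pairsOf L ∨ (y, x) ∈ pairsOf L) hcp2
    refine ⟨cyc L, ⟨⟨L, hL, rfl⟩, mem_cyc.mpr (mem_edgesList_pair.mpr hpL)⟩, ?_⟩
    rintro C ⟨⟨L', hL', rfl⟩, heC⟩
    rw [huniq L' hL' (mem_edgesList_pair.mp (mem_cyc.mp heC))]

lemma orthoN (cyclesA cyclesB : List (List (Fin 21))) (pNA pNB : List (List ℕ))
    (hpNA : pNA = cyclesA.map (fun L => pairsN (L.map Fin.val)))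
    (hpNB : pNB = cyclesB.map (fun L => pairsN (L.map Fin.val)))
    (hkey : ∀ l1 ∈ pNA, ∀ l2 ∈ pNB, l1.countP (fun m => decide (m ∈ l2)) ≤ 1) :
    ∀ C₁ ∈ {C | ∃ L ∈ cyclesA, C = cyc L}, ∀ C₂ ∈ {C | ∃ L ∈ cyclesB, C = cyc L},
      (C₁ ∩ C₂).Subsingleton := by
  rintro C₁ ⟨L₁, hL₁, rfl⟩ C₂ ⟨L₂, hL₂, rfl⟩ e ⟨he₁, he₂⟩ f ⟨hf₁, hf₂⟩
  rw [mem_cyc] at he₁ he₂ hf₁ hf₂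
  simp only [edgesList, List.mem_map] at he₁ hf₁
  obtain ⟨p, hp, rfl⟩ := he₁
  obtain ⟨q, hq, rfl⟩ := hf₁
  have hcnt : (pairsOf L₁).countP
      (fun p => decide (encr p.1.val p.2.val ∈ pairsN (L₂.map Fin.val))) ≤ 1 := by
    have h1 : pairsN (L₁.map Fin.val) ∈ pNA := hpNA ▸ List.mem_map_of_mem (f := fun L => pairsN (L.map Fin.val)) hL₁
    have h2 : pairsN (L₂.map Fin.val) ∈ pNB := hpNB ▸ List.mem_map_of_mem (f := fun L => pairsN (L.map Fin.val)) hL₂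
    have := hkey _ h1 _ h2
    rwa [pairsN_map L₁, List.countP_map] at this
  have hpq : p = q := by
    refine eq_of_countP_le_one (pairsOf L₁)
      (fun p => encr p.1.val p.2.val ∈ pairsN (L₂.map Fin.val)) hcnt hp ?_ hq ?_
    · exact mem_pairsN_iff.mpr (mem_edgesList_pair.mp he₂)
    · exact mem_pairsN_iff.mpr (mem_edgesList_pair.mp hf₂)
  rw [hpq]
def wa0 : Gr.Walk 0 0 :=
  .cons (u := 0) (v := 7) (by decide) (.cons (u := 7) (v := 11) (by decide) (.cons (u := 11) (v := 14) (by decide) (.cons (u := 14) (v := 19) (by decide) (.cons (u := 19) (v := 12) (by decide) (.cons (u := 12) (v := 13) (by decide) (.cons (u := 13) (v := 0) (by decide) .nil))))))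

theorem ha0 : IsCycleEdgeSet 7 (cyc [0, 7, 11, 14, 19, 12, 13]) :=
  ⟨Gr, 0, wa0, by decide, rfl, by
    simp only [cyc, show wa0.edges = edgesList [0, 7, 11, 14, 19, 12, 13] from by decide]⟩

def wa1 : Gr.Walk 0 0 :=
  .cons (u := 0) (v := 8) (by decide) (.cons (u := 8) (v := 15) (by decide) (.cons (u := 15) (v := 1) (by decide) (.cons (u := 1) (v := 7) (by decide) (.cons (u := 7) (v := 2) (by decide) (.cons (u := 2) (v := 10) (by decide) (.cons (u := 10) (v := 0) (by decide) .nil))))))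

theorem ha1 : IsCycleEdgeSet 7 (cyc [0, 8, 15, 1, 7, 2, 10]) :=
  ⟨Gr, 0, wa1, by decide, rfl, by
    simp only [cyc, show wa1.edges = edgesList [0, 8, 15, 1, 7, 2, 10] from by decide]⟩

def wa2 : Gr.Walk 0 0 :=
  .cons (u := 0) (v := 9) (by decide) (.cons (u := 9) (v := 3) (by decide) (.cons (u := 3) (v := 12) (by decide) (.cons (u := 12) (v := 2) (by decide) (.cons (u := 2) (v := 13) (by decide) (.cons (u := 13) (v := 20) (by decide) (.cons (u := 20) (v := 0) (by decide) .nil))))))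

theorem ha2 : IsCycleEdgeSet 7 (cyc [0, 9, 3, 12, 2, 13, 20]) :=
  ⟨Gr, 0, wa2, by decide, rfl, by
    simp only [cyc, show wa2.edges = edgesList [0, 9, 3, 12, 2, 13, 20] from by decide]⟩

def wa3 : Gr.Walk 0 0 :=
  .cons (u := 0) (v := 11) (by decide) (.cons (u := 11) (v := 4) (by decide) (.cons (u := 4) (v := 18) (by decide) (.cons (u := 18) (v := 6) (by decide) (.cons (u := 6) (v := 10) (by decide) (.cons (u := 10) (v := 17) (by decide) (.cons (u := 17) (v := 0) (by decide) .nil))))))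

theorem ha3 : IsCycleEdgeSet 7 (cyc [0, 11, 4, 18, 6, 10, 17]) :=
  ⟨Gr, 0, wa3, by decide, rfl, by
    simp only [cyc, show wa3.edges = edgesList [0, 11, 4, 18, 6, 10, 17] from by decide]⟩

def wa4 : Gr.Walk 0 0 :=
  .cons (u := 0) (v := 12) (by decide) (.cons (u := 12) (v := 15) (by decide) (.cons (u := 15) (v := 10) (by decide) (.cons (u := 10) (v := 9) (by decide) (.cons (u := 9) (v := 17) (by decide) (.cons (u := 17) (v := 19) (by decide) (.cons (u := 19) (v := 0) (by decide) .nil))))))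

theorem ha4 : IsCycleEdgeSet 7 (cyc [0, 12, 15, 10, 9, 17, 19]) :=
  ⟨Gr, 0, wa4, by decide, rfl, by
    simp only [cyc, show wa4.edges = edgesList [0, 12, 15, 10, 9, 17, 19] from by decide]⟩

def wa5 : Gr.Walk 0 0 :=
  .cons (u := 0) (v := 14) (by decide) (.cons (u := 14) (v := 5) (by decide) (.cons (u := 5) (v := 9) (by decide) (.cons (u := 9) (v := 20) (by decide) (.cons (u := 20) (v := 16) (by decide) (.cons (u := 16) (v := 15) (by decide) (.cons (u := 15) (v := 0) (by decide) .nil))))))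

theorem ha5 : IsCycleEdgeSet 7 (cyc [0, 14, 5, 9, 20, 16, 15]) :=
  ⟨Gr, 0, wa5, by decide, rfl, by
    simp only [cyc, show wa5.edges = edgesList [0, 14, 5, 9, 20, 16, 15] from by decide]⟩

def wa6 : Gr.Walk 0 0 :=
  .cons (u := 0) (v := 16) (by decide) (.cons (u := 16) (v := 11) (by decide) (.cons (u := 11) (v := 1) (by decide) (.cons (u := 1) (v := 13) (by decide) (.cons (u := 13) (v := 3) (by decide) (.cons (u := 3) (v := 18) (by decide) (.cons (u := 18) (v := 0) (by decide) .nil))))))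

theorem ha6 : IsCycleEdgeSet 7 (cyc [0, 16, 11, 1, 13, 3, 18]) :=
  ⟨Gr, 0, wa6, by decide, rfl, by
    simp only [cyc, show wa6.edges = edgesList [0, 16, 11, 1, 13, 3, 18] from by decide]⟩

def wa7 : Gr.Walk 1 1 :=
  .cons (u := 1) (v := 8) (by decide) (.cons (u := 8) (v := 13) (by decide) (.cons (u := 13) (v := 10) (by decide) (.cons (u := 10) (v := 16) (by decide) (.cons (u := 16) (v := 2) (by decide) (.cons (u := 2) (v := 17) (by decide) (.cons (u := 17) (v := 1) (by decide) .nil))))))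

theorem ha7 : IsCycleEdgeSet 7 (cyc [1, 8, 13, 10, 16, 2, 17]) :=
  ⟨Gr, 1, wa7, by decide, rfl, by
    simp only [cyc, show wa7.edges = edgesList [1, 8, 13, 10, 16, 2, 17] from by decide]⟩

def wa8 : Gr.Walk 1 1 :=
  .cons (u := 1) (v := 9) (by decide) (.cons (u := 9) (v := 19) (by decide) (.cons (u := 19) (v := 5) (by decide) (.cons (u := 5) (v := 8) (by decide) (.cons (u := 8) (v := 7) (by decide) (.cons (u := 7) (v := 10) (by decide) (.cons (u := 10) (v := 1) (by decide) .nil))))))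

theorem ha8 : IsCycleEdgeSet 7 (cyc [1, 9, 19, 5, 8, 7, 10]) :=
  ⟨Gr, 1, wa8, by decide, rfl, by
    simp only [cyc, show wa8.edges = edgesList [1, 9, 19, 5, 8, 7, 10] from by decide]⟩

def wa9 : Gr.Walk 1 1 :=
  .cons (u := 1) (v := 12) (by decide) (.cons (u := 12) (v := 17) (by decide) (.cons (u := 17) (v := 3) (by decide) (.cons (u := 3) (v := 8) (by decide) (.cons (u := 8) (v := 4) (by decide) (.cons (u := 4) (v := 20) (by decide) (.cons (u := 20) (v := 1) (by decide) .nil))))))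

theorem ha9 : IsCycleEdgeSet 7 (cyc [1, 12, 17, 3, 8, 4, 20]) :=
  ⟨Gr, 1, wa9, by decide, rfl, by
    simp only [cyc, show wa9.edges = edgesList [1, 12, 17, 3, 8, 4, 20] from by decide]⟩

def wa10 : Gr.Walk 1 1 :=
  .cons (u := 1) (v := 14) (by decide) (.cons (u := 14) (v := 16) (by decide) (.cons (u := 16) (v := 18) (by decide) (.cons (u := 18) (v := 20) (by decide) (.cons (u := 20) (v := 11) (by decide) (.cons (u := 11) (v := 19) (by decide) (.cons (u := 19) (v := 1) (by decide) .nil))))))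

theorem ha10 : IsCycleEdgeSet 7 (cyc [1, 14, 16, 18, 20, 11, 19]) :=
  ⟨Gr, 1, wa10, by decide, rfl, by
    simp only [cyc, show wa10.edges = edgesList [1, 14, 16, 18, 20, 11, 19] from by decide]⟩

def wa11 : Gr.Walk 1 1 :=
  .cons (u := 1) (v := 16) (by decide) (.cons (u := 16) (v := 9) (by decide) (.cons (u := 9) (v := 14) (by decide) (.cons (u := 14) (v := 6) (by decide) (.cons (u := 6) (v := 15) (by decide) (.cons (u := 15) (v := 18) (by decide) (.cons (u := 18) (v := 1) (by decide) .nil))))))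

theorem ha11 : IsCycleEdgeSet 7 (cyc [1, 16, 9, 14, 6, 15, 18]) :=
  ⟨Gr, 1, wa11, by decide, rfl, by
    simp only [cyc, show wa11.edges = edgesList [1, 16, 9, 14, 6, 15, 18] from by decide]⟩

def wa12 : Gr.Walk 2 2 :=
  .cons (u := 2) (v := 8) (by decide) (.cons (u := 8) (v := 10) (by decide) (.cons (u := 10) (v := 19) (by decide) (.cons (u := 19) (v := 7) (by decide) (.cons (u := 7) (v := 17) (by decide) (.cons (u := 17) (v := 15) (by decide) (.cons (u := 15) (v := 2) (by decide) .nil))))))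

theorem ha12 : IsCycleEdgeSet 7 (cyc [2, 8, 10, 19, 7, 17, 15]) :=
  ⟨Gr, 2, wa12, by decide, rfl, by
    simp only [cyc, show wa12.edges = edgesList [2, 8, 10, 19, 7, 17, 15] from by decide]⟩

def wa13 : Gr.Walk 2 2 :=
  .cons (u := 2) (v := 9) (by decide) (.cons (u := 9) (v := 6) (by decide) (.cons (u := 6) (v := 12) (by decide) (.cons (u := 12) (v := 20) (by decide) (.cons (u := 20) (v := 15) (by decide) (.cons (u := 15) (v := 14) (by decide) (.cons (u := 14) (v := 2) (by decide) .nil))))))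

theorem ha13 : IsCycleEdgeSet 7 (cyc [2, 9, 6, 12, 20, 15, 14]) :=
  ⟨Gr, 2, wa13, by decide, rfl, by
    simp only [cyc, show wa13.edges = edgesList [2, 9, 6, 12, 20, 15, 14] from by decide]⟩

def wa14 : Gr.Walk 2 2 :=
  .cons (u := 2) (v := 11) (by decide) (.cons (u := 11) (v := 15) (by decide) (.cons (u := 15) (v := 13) (by decide) (.cons (u := 13) (v := 4) (by decide) (.cons (u := 4) (v := 16) (by decide) (.cons (u := 16) (v := 19) (by decide) (.cons (u := 19) (v := 2) (by decide) .nil))))))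

theorem ha14 : IsCycleEdgeSet 7 (cyc [2, 11, 15, 13, 4, 16, 19]) :=
  ⟨Gr, 2, wa14, by decide, rfl, by
    simp only [cyc, show wa14.edges = edgesList [2, 11, 15, 13, 4, 16, 19] from by decide]⟩

def wa15 : Gr.Walk 2 2 :=
  .cons (u := 2) (v := 18) (by decide) (.cons (u := 18) (v := 17) (by decide) (.cons (u := 17) (v := 13) (by decide) (.cons (u := 13) (v := 9) (by decide) (.cons (u := 9) (v := 8) (by decide) (.cons (u := 8) (v := 20) (by decide) (.cons (u := 20) (v := 2) (by decide) .nil))))))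

theorem ha15 : IsCycleEdgeSet 7 (cyc [2, 18, 17, 13, 9, 8, 20]) :=
  ⟨Gr, 2, wa15, by decide, rfl, by
    simp only [cyc, show wa15.edges = edgesList [2, 18, 17, 13, 9, 8, 20] from by decide]⟩

def wa16 : Gr.Walk 3 3 :=
  .cons (u := 3) (v := 7) (by decide) (.cons (u := 7) (v := 18) (by decide) (.cons (u := 18) (v := 19) (by decide) (.cons (u := 19) (v := 15) (by decide) (.cons (u := 15) (v := 4) (by decide) (.cons (u := 4) (v := 14) (by decide) (.cons (u := 14) (v := 3) (by decide) .nil))))))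

theorem ha16 : IsCycleEdgeSet 7 (cyc [3, 7, 18, 19, 15, 4, 14]) :=
  ⟨Gr, 3, wa16, by decide, rfl, by
    simp only [cyc, show wa16.edges = edgesList [3, 7, 18, 19, 15, 4, 14] from by decide]⟩

def wa17 : Gr.Walk 3 3 :=
  .cons (u := 3) (v := 10) (by decide) (.cons (u := 10) (v := 14) (by decide) (.cons (u := 14) (v := 12) (by decide) (.cons (u := 12) (v := 11) (by decide) (.cons (u := 11) (v := 17) (by decide) (.cons (u := 17) (v := 16) (by decide) (.cons (u := 16) (v := 3) (by decide) .nil))))))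

theorem ha17 : IsCycleEdgeSet 7 (cyc [3, 10, 14, 12, 11, 17, 16]) :=
  ⟨Gr, 3, wa17, by decide, rfl, by
    simp only [cyc, show wa17.edges = edgesList [3, 10, 14, 12, 11, 17, 16] from by decide]⟩

def wa18 : Gr.Walk 3 3 :=
  .cons (u := 3) (v := 11) (by decide) (.cons (u := 11) (v := 10) (by decide) (.cons (u := 10) (v := 12) (by decide) (.cons (u := 12) (v := 4) (by decide) (.cons (u := 4) (v := 7) (by decide) (.cons (u := 7) (v := 20) (by decide) (.cons (u := 20) (v := 3) (by decide) .nil))))))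

theorem ha18 : IsCycleEdgeSet 7 (cyc [3, 11, 10, 12, 4, 7, 20]) :=
  ⟨Gr, 3, wa18, by decide, rfl, by
    simp only [cyc, show wa18.edges = edgesList [3, 11, 10, 12, 4, 7, 20] from by decide]⟩

def wa19 : Gr.Walk 3 3 :=
  .cons (u := 3) (v := 15) (by decide) (.cons (u := 15) (v := 7) (by decide) (.cons (u := 7) (v := 9) (by decide) (.cons (u := 9) (v := 12) (by decide) (.cons (u := 12) (v := 8) (by decide) (.cons (u := 8) (v := 19) (by decide) (.cons (u := 19) (v := 3) (by decide) .nil))))))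

theorem ha19 : IsCycleEdgeSet 7 (cyc [3, 15, 7, 9, 12, 8, 19]) :=
  ⟨Gr, 3, wa19, by decide, rfl, by
    simp only [cyc, show wa19.edges = edgesList [3, 15, 7, 9, 12, 8, 19] from by decide]⟩

def wa20 : Gr.Walk 4 4 :=
  .cons (u := 4) (v := 9) (by decide) (.cons (u := 9) (v := 11) (by decide) (.cons (u := 11) (v := 13) (by decide) (.cons (u := 13) (v := 18) (by decide) (.cons (u := 18) (v := 5) (by decide) (.cons (u := 5) (v := 17) (by decide) (.cons (u := 17) (v := 4) (by decide) .nil))))))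

theorem ha20 : IsCycleEdgeSet 7 (cyc [4, 9, 11, 13, 18, 5, 17]) :=
  ⟨Gr, 4, wa20, by decide, rfl, by
    simp only [cyc, show wa20.edges = edgesList [4, 9, 11, 13, 18, 5, 17] from by decide]⟩

def wa21 : Gr.Walk 4 4 :=
  .cons (u := 4) (v := 10) (by decide) (.cons (u := 10) (v := 5) (by decide) (.cons (u := 5) (v := 12) (by decide) (.cons (u := 12) (v := 16) (by decide) (.cons (u := 16) (v := 6) (by decide) (.cons (u := 6) (v := 19) (by decide) (.cons (u := 19) (v := 4) (by decide) .nil))))))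

theorem ha21 : IsCycleEdgeSet 7 (cyc [4, 10, 5, 12, 16, 6, 19]) :=
  ⟨Gr, 4, wa21, by decide, rfl, by
    simp only [cyc, show wa21.edges = edgesList [4, 10, 5, 12, 16, 6, 19] from by decide]⟩

def wa22 : Gr.Walk 5 5 :=
  .cons (u := 5) (v := 7) (by decide) (.cons (u := 7) (v := 6) (by decide) (.cons (u := 6) (v := 17) (by decide) (.cons (u := 17) (v := 8) (by decide) (.cons (u := 8) (v := 16) (by decide) (.cons (u := 16) (v := 13) (by decide) (.cons (u := 13) (v := 5) (by decide) .nil))))))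

theorem ha22 : IsCycleEdgeSet 7 (cyc [5, 7, 6, 17, 8, 16, 13]) :=
  ⟨Gr, 5, wa22, by decide, rfl, by
    simp only [cyc, show wa22.edges = edgesList [5, 7, 6, 17, 8, 16, 13] from by decide]⟩

def wa23 : Gr.Walk 5 5 :=
  .cons (u := 5) (v := 11) (by decide) (.cons (u := 11) (v := 8) (by decide) (.cons (u := 8) (v := 6) (by decide) (.cons (u := 6) (v := 13) (by decide) (.cons (u := 13) (v := 14) (by decide) (.cons (u := 14) (v := 20) (by decide) (.cons (u := 20) (v := 5) (by decide) .nil))))))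

theorem ha23 : IsCycleEdgeSet 7 (cyc [5, 11, 8, 6, 13, 14, 20]) :=
  ⟨Gr, 5, wa23, by decide, rfl, by
    simp only [cyc, show wa23.edges = edgesList [5, 11, 8, 6, 13, 14, 20] from by decide]⟩

def wa24 : Gr.Walk 5 5 :=
  .cons (u := 5) (v := 15) (by decide) (.cons (u := 15) (v := 9) (by decide) (.cons (u := 9) (v := 18) (by decide) (.cons (u := 18) (v := 14) (by decide) (.cons (u := 14) (v := 7) (by decide) (.cons (u := 7) (v := 16) (by decide) (.cons (u := 16) (v := 5) (by decide) .nil))))))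

theorem ha24 : IsCycleEdgeSet 7 (cyc [5, 15, 9, 18, 14, 7, 16]) :=
  ⟨Gr, 5, wa24, by decide, rfl, by
    simp only [cyc, show wa24.edges = edgesList [5, 15, 9, 18, 14, 7, 16] from by decide]⟩

def wa25 : Gr.Walk 6 6 :=
  .cons (u := 6) (v := 11) (by decide) (.cons (u := 11) (v := 18) (by decide) (.cons (u := 18) (v := 8) (by decide) (.cons (u := 8) (v := 14) (by decide) (.cons (u := 14) (v := 17) (by decide) (.cons (u := 17) (v := 20) (by decide) (.cons (u := 20) (v := 6) (by decide) .nil))))))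

theorem ha25 : IsCycleEdgeSet 7 (cyc [6, 11, 18, 8, 14, 17, 20]) :=
  ⟨Gr, 6, wa25, by decide, rfl, by
    simp only [cyc, show wa25.edges = edgesList [6, 11, 18, 8, 14, 17, 20] from by decide]⟩

def wa26 : Gr.Walk 7 7 :=
  .cons (u := 7) (v := 12) (by decide) (.cons (u := 12) (v := 18) (by decide) (.cons (u := 18) (v := 10) (by decide) (.cons (u := 10) (v := 20) (by decide) (.cons (u := 20) (v := 19) (by decide) (.cons (u := 19) (v := 13) (by decide) (.cons (u := 13) (v := 7) (by decide) .nil))))))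

theorem ha26 : IsCycleEdgeSet 7 (cyc [7, 12, 18, 10, 20, 19, 13]) :=
  ⟨Gr, 7, wa26, by decide, rfl, by
    simp only [cyc, show wa26.edges = edgesList [7, 12, 18, 10, 20, 19, 13] from by decide]⟩

def cyclesa : List (List (Fin 21)) :=
  [[0, 7, 11, 14, 19, 12, 13],
   [0, 8, 15, 1, 7, 2, 10],
   [0, 9, 3, 12, 2, 13, 20],
   [0, 11, 4, 18, 6, 10, 17],
   [0, 12, 15, 10, 9, 17, 19],
   [0, 14, 5, 9, 20, 16, 15],
   [0, 16, 11, 1, 13, 3, 18],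
   [1, 8, 13, 10, 16, 2, 17],
   [1, 9, 19, 5, 8, 7, 10],
   [1, 12, 17, 3, 8, 4, 20],
   [1, 14, 16, 18, 20, 11, 19],
   [1, 16, 9, 14, 6, 15, 18],
   [2, 8, 10, 19, 7, 17, 15],
   [2, 9, 6, 12, 20, 15, 14],
   [2, 11, 15, 13, 4, 16, 19],
   [2, 18, 17, 13, 9, 8, 20],
   [3, 7, 18, 19, 15, 4, 14],
   [3, 10, 14, 12, 11, 17, 16],
   [3, 11, 10, 12, 4, 7, 20],
   [3, 15, 7, 9, 12, 8, 19],
   [4, 9, 11, 13, 18, 5, 17],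
   [4, 10, 5, 12, 16, 6, 19],
   [5, 7, 6, 17, 8, 16, 13],
   [5, 11, 8, 6, 13, 14, 20],
   [5, 15, 9, 18, 14, 7, 16],
   [6, 11, 18, 8, 14, 17, 20],
   [7, 12, 18, 10, 20, 19, 13]]

lemma hcycsa : ∀ L ∈ cyclesa, IsCycleEdgeSet 7 (cyc L) := by
  intro L hL
  fin_cases hL
  · exact ha0
  · exact ha1
  · exact ha2
  · exact ha3
  · exact ha4
  · exact ha5
  · exact ha6
  · exact ha7
  · exact ha8
  · exact ha9
  · exact ha10
  · exact ha11
  · exact ha12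
  · exact ha13
  · exact ha14
  · exact ha15
  · exact ha16
  · exact ha17
  · exact ha18
  · exact ha19
  · exact ha20
  · exact ha21
  · exact ha22
  · exact ha23
  · exact ha24
  · exact ha25
  · exact ha26

def wb0 : Gr.Walk 0 0 :=
  .cons (u := 0) (v := 7) (by decide) (.cons (u := 7) (v := 17) (by decide) (.cons (u := 17) (v := 10) (by decide) (.cons (u := 10) (v := 13) (by decide) (.cons (u := 13) (v := 16) (by decide) (.cons (u := 16) (v := 20) (by decide) (.cons (u := 20) (v := 0) (by decide) .nil))))))

theorem hb0 : IsCycleEdgeSet 7 (cyc [0, 7, 17, 10, 13, 16, 20]) :=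
  ⟨Gr, 0, wb0, by decide, rfl, by
    simp only [cyc, show wb0.edges = edgesList [0, 7, 17, 10, 13, 16, 20] from by decide]⟩

def wb1 : Gr.Walk 0 0 :=
  .cons (u := 0) (v := 8) (by decide) (.cons (u := 8) (v := 5) (by decide) (.cons (u := 5) (v := 17) (by decide) (.cons (u := 17) (v := 9) (by decide) (.cons (u := 9) (v := 12) (by decide) (.cons (u := 12) (v := 18) (by decide) (.cons (u := 18) (v := 0) (by decide) .nil))))))

theorem hb1 : IsCycleEdgeSet 7 (cyc [0, 8, 5, 17, 9, 12, 18]) :=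
  ⟨Gr, 0, wb1, by decide, rfl, by
    simp only [cyc, show wb1.edges = edgesList [0, 8, 5, 17, 9, 12, 18] from by decide]⟩

def wb2 : Gr.Walk 0 0 :=
  .cons (u := 0) (v := 9) (by decide) (.cons (u := 9) (v := 14) (by decide) (.cons (u := 14) (v := 1) (by decide) (.cons (u := 1) (v := 17) (by decide) (.cons (u := 17) (v := 4) (by decide) (.cons (u := 4) (v := 15) (by decide) (.cons (u := 15) (v := 0) (by decide) .nil))))))

theorem hb2 : IsCycleEdgeSet 7 (cyc [0, 9, 14, 1, 17, 4, 15]) :=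
  ⟨Gr, 0, wb2, by decide, rfl, by
    simp only [cyc, show wb2.edges = edgesList [0, 9, 14, 1, 17, 4, 15] from by decide]⟩

def wb3 : Gr.Walk 0 0 :=
  .cons (u := 0) (v := 10) (by decide) (.cons (u := 10) (v := 1) (by decide) (.cons (u := 1) (v := 12) (by decide) (.cons (u := 12) (v := 5) (by decide) (.cons (u := 5) (v := 7) (by decide) (.cons (u := 7) (v := 19) (by decide) (.cons (u := 19) (v := 0) (by decide) .nil))))))

theorem hb3 : IsCycleEdgeSet 7 (cyc [0, 10, 1, 12, 5, 7, 19]) :=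
  ⟨Gr, 0, wb3, by decide, rfl, by
    simp only [cyc, show wb3.edges = edgesList [0, 10, 1, 12, 5, 7, 19] from by decide]⟩

def wb4 : Gr.Walk 0 0 :=
  .cons (u := 0) (v := 11) (by decide) (.cons (u := 11) (v := 12) (by decide) (.cons (u := 12) (v := 2) (by decide) (.cons (u := 2) (v := 9) (by decide) (.cons (u := 9) (v := 19) (by decide) (.cons (u := 19) (v := 16) (by decide) (.cons (u := 16) (v := 0) (by decide) .nil))))))

theorem hb4 : IsCycleEdgeSet 7 (cyc [0, 11, 12, 2, 9, 19, 16]) :=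
  ⟨Gr, 0, wb4, by decide, rfl, by
    simp only [cyc, show wb4.edges = edgesList [0, 11, 12, 2, 9, 19, 16] from by decide]⟩

def wb5 : Gr.Walk 0 0 :=
  .cons (u := 0) (v := 12) (by decide) (.cons (u := 12) (v := 8) (by decide) (.cons (u := 8) (v := 14) (by decide) (.cons (u := 14) (v := 10) (by decide) (.cons (u := 10) (v := 18) (by decide) (.cons (u := 18) (v := 13) (by decide) (.cons (u := 13) (v := 0) (by decide) .nil))))))

theorem hb5 : IsCycleEdgeSet 7 (cyc [0, 12, 8, 14, 10, 18, 13]) :=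
  ⟨Gr, 0, wb5, by decide, rfl, by
    simp only [cyc, show wb5.edges = edgesList [0, 12, 8, 14, 10, 18, 13] from by decide]⟩

def wb6 : Gr.Walk 0 0 :=
  .cons (u := 0) (v := 14) (by decide) (.cons (u := 14) (v := 19) (by decide) (.cons (u := 19) (v := 13) (by decide) (.cons (u := 13) (v := 20) (by decide) (.cons (u := 20) (v := 12) (by decide) (.cons (u := 12) (v := 17) (by decide) (.cons (u := 17) (v := 0) (by decide) .nil))))))

theorem hb6 : IsCycleEdgeSet 7 (cyc [0, 14, 19, 13, 20, 12, 17]) :=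
  ⟨Gr, 0, wb6, by decide, rfl, by
    simp only [cyc, show wb6.edges = edgesList [0, 14, 19, 13, 20, 12, 17] from by decide]⟩

def wb7 : Gr.Walk 1 1 :=
  .cons (u := 1) (v := 7) (by decide) (.cons (u := 7) (v := 8) (by decide) (.cons (u := 8) (v := 10) (by decide) (.cons (u := 10) (v := 20) (by decide) (.cons (u := 20) (v := 2) (by decide) (.cons (u := 2) (v := 13) (by decide) (.cons (u := 13) (v := 1) (by decide) .nil))))))

theorem hb7 : IsCycleEdgeSet 7 (cyc [1, 7, 8, 10, 20, 2, 13]) :=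
  ⟨Gr, 1, wb7, by decide, rfl, by
    simp only [cyc, show wb7.edges = edgesList [1, 7, 8, 10, 20, 2, 13] from by decide]⟩

def wb8 : Gr.Walk 1 1 :=
  .cons (u := 1) (v := 8) (by decide) (.cons (u := 8) (v := 11) (by decide) (.cons (u := 11) (v := 3) (by decide) (.cons (u := 3) (v := 12) (by decide) (.cons (u := 12) (v := 14) (by decide) (.cons (u := 14) (v := 18) (by decide) (.cons (u := 18) (v := 1) (by decide) .nil))))))

theorem hb8 : IsCycleEdgeSet 7 (cyc [1, 8, 11, 3, 12, 14, 18]) :=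
  ⟨Gr, 1, wb8, by decide, rfl, by
    simp only [cyc, show wb8.edges = edgesList [1, 8, 11, 3, 12, 14, 18] from by decide]⟩

def wb9 : Gr.Walk 1 1 :=
  .cons (u := 1) (v := 9) (by decide) (.cons (u := 9) (v := 10) (by decide) (.cons (u := 10) (v := 4) (by decide) (.cons (u := 4) (v := 13) (by decide) (.cons (u := 13) (v := 6) (by decide) (.cons (u := 6) (v := 20) (by decide) (.cons (u := 20) (v := 1) (by decide) .nil))))))

theorem hb9 : IsCycleEdgeSet 7 (cyc [1, 9, 10, 4, 13, 6, 20]) :=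
  ⟨Gr, 1, wb9, by decide, rfl, by
    simp only [cyc, show wb9.edges = edgesList [1, 9, 10, 4, 13, 6, 20] from by decide]⟩

def wb10 : Gr.Walk 1 1 :=
  .cons (u := 1) (v := 11) (by decide) (.cons (u := 11) (v := 5) (by decide) (.cons (u := 5) (v := 19) (by decide) (.cons (u := 19) (v := 18) (by decide) (.cons (u := 18) (v := 17) (by decide) (.cons (u := 17) (v := 16) (by decide) (.cons (u := 16) (v := 1) (by decide) .nil))))))

theorem hb10 : IsCycleEdgeSet 7 (cyc [1, 11, 5, 19, 18, 17, 16]) :=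
  ⟨Gr, 1, wb10, by decide, rfl, by
    simp only [cyc, show wb10.edges = edgesList [1, 11, 5, 19, 18, 17, 16] from by decide]⟩

def wb11 : Gr.Walk 1 1 :=
  .cons (u := 1) (v := 15) (by decide) (.cons (u := 15) (v := 14) (by decide) (.cons (u := 14) (v := 13) (by decide) (.cons (u := 13) (v := 3) (by decide) (.cons (u := 3) (v := 8) (by decide) (.cons (u := 8) (v := 19) (by decide) (.cons (u := 19) (v := 1) (by decide) .nil))))))

theorem hb11 : IsCycleEdgeSet 7 (cyc [1, 15, 14, 13, 3, 8, 19]) :=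
  ⟨Gr, 1, wb11, by decide, rfl, by
    simp only [cyc, show wb11.edges = edgesList [1, 15, 14, 13, 3, 8, 19] from by decide]⟩

def wb12 : Gr.Walk 2 2 :=
  .cons (u := 2) (v := 7) (by decide) (.cons (u := 7) (v := 15) (by decide) (.cons (u := 15) (v := 10) (by decide) (.cons (u := 10) (v := 11) (by decide) (.cons (u := 11) (v := 6) (by decide) (.cons (u := 6) (v := 14) (by decide) (.cons (u := 14) (v := 2) (by decide) .nil))))))

theorem hb12 : IsCycleEdgeSet 7 (cyc [2, 7, 15, 10, 11, 6, 14]) :=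
  ⟨Gr, 2, wb12, by decide, rfl, by
    simp only [cyc, show wb12.edges = edgesList [2, 7, 15, 10, 11, 6, 14] from by decide]⟩

def wb13 : Gr.Walk 2 2 :=
  .cons (u := 2) (v := 8) (by decide) (.cons (u := 8) (v := 20) (by decide) (.cons (u := 20) (v := 15) (by decide) (.cons (u := 15) (v := 13) (by decide) (.cons (u := 13) (v := 5) (by decide) (.cons (u := 5) (v := 10) (by decide) (.cons (u := 10) (v := 2) (by decide) .nil))))))

theorem hb13 : IsCycleEdgeSet 7 (cyc [2, 8, 20, 15, 13, 5, 10]) :=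
  ⟨Gr, 2, wb13, by decide, rfl, by
    simp only [cyc, show wb13.edges = edgesList [2, 8, 20, 15, 13, 5, 10] from by decide]⟩

def wb14 : Gr.Walk 2 2 :=
  .cons (u := 2) (v := 11) (by decide) (.cons (u := 11) (v := 9) (by decide) (.cons (u := 9) (v := 15) (by decide) (.cons (u := 15) (v := 18) (by decide) (.cons (u := 18) (v := 3) (by decide) (.cons (u := 3) (v := 16) (by decide) (.cons (u := 16) (v := 2) (by decide) .nil))))))

theorem hb14 : IsCycleEdgeSet 7 (cyc [2, 11, 9, 15, 18, 3, 16]) :=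
  ⟨Gr, 2, wb14, by decide, rfl, by
    simp only [cyc, show wb14.edges = edgesList [2, 11, 9, 15, 18, 3, 16] from by decide]⟩

def wb15 : Gr.Walk 2 2 :=
  .cons (u := 2) (v := 15) (by decide) (.cons (u := 15) (v := 12) (by decide) (.cons (u := 12) (v := 7) (by decide) (.cons (u := 7) (v := 14) (by decide) (.cons (u := 14) (v := 11) (by decide) (.cons (u := 11) (v := 19) (by decide) (.cons (u := 19) (v := 2) (by decide) .nil))))))

theorem hb15 : IsCycleEdgeSet 7 (cyc [2, 15, 12, 7, 14, 11, 19]) :=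
  ⟨Gr, 2, wb15, by decide, rfl, by
    simp only [cyc, show wb15.edges = edgesList [2, 15, 12, 7, 14, 11, 19] from by decide]⟩

def wb16 : Gr.Walk 2 2 :=
  .cons (u := 2) (v := 17) (by decide) (.cons (u := 17) (v := 8) (by decide) (.cons (u := 8) (v := 4) (by decide) (.cons (u := 4) (v := 7) (by decide) (.cons (u := 7) (v := 11) (by decide) (.cons (u := 11) (v := 18) (by decide) (.cons (u := 18) (v := 2) (by decide) .nil))))))

theorem hb16 : IsCycleEdgeSet 7 (cyc [2, 17, 8, 4, 7, 11, 18]) :=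
  ⟨Gr, 2, wb16, by decide, rfl, by
    simp only [cyc, show wb16.edges = edgesList [2, 17, 8, 4, 7, 11, 18] from by decide]⟩

def wb17 : Gr.Walk 3 3 :=
  .cons (u := 3) (v := 7) (by decide) (.cons (u := 7) (v := 9) (by decide) (.cons (u := 9) (v := 6) (by decide) (.cons (u := 6) (v := 8) (by decide) (.cons (u := 8) (v := 15) (by decide) (.cons (u := 15) (v := 17) (by decide) (.cons (u := 17) (v := 3) (by decide) .nil))))))

theorem hb17 : IsCycleEdgeSet 7 (cyc [3, 7, 9, 6, 8, 15, 17]) :=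
  ⟨Gr, 3, wb17, by decide, rfl, by
    simp only [cyc, show wb17.edges = edgesList [3, 7, 9, 6, 8, 15, 17] from by decide]⟩

def wb18 : Gr.Walk 3 3 :=
  .cons (u := 3) (v := 9) (by decide) (.cons (u := 9) (v := 18) (by decide) (.cons (u := 18) (v := 16) (by decide) (.cons (u := 16) (v := 10) (by decide) (.cons (u := 10) (v := 19) (by decide) (.cons (u := 19) (v := 15) (by decide) (.cons (u := 15) (v := 3) (by decide) .nil))))))

theorem hb18 : IsCycleEdgeSet 7 (cyc [3, 9, 18, 16, 10, 19, 15]) :=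
  ⟨Gr, 3, wb18, by decide, rfl, by
    simp only [cyc, show wb18.edges = edgesList [3, 9, 18, 16, 10, 19, 15] from by decide]⟩

def wb19 : Gr.Walk 3 3 :=
  .cons (u := 3) (v := 10) (by decide) (.cons (u := 10) (v := 6) (by decide) (.cons (u := 6) (v := 12) (by decide) (.cons (u := 12) (v := 19) (by decide) (.cons (u := 19) (v := 17) (by decide) (.cons (u := 17) (v := 20) (by decide) (.cons (u := 20) (v := 3) (by decide) .nil))))))

theorem hb19 : IsCycleEdgeSet 7 (cyc [3, 10, 6, 12, 19, 17, 20]) :=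
  ⟨Gr, 3, wb19, by decide, rfl, by
    simp only [cyc, show wb19.edges = edgesList [3, 10, 6, 12, 19, 17, 20] from by decide]⟩

def wb20 : Gr.Walk 3 3 :=
  .cons (u := 3) (v := 14) (by decide) (.cons (u := 14) (v := 5) (by decide) (.cons (u := 5) (v := 15) (by decide) (.cons (u := 15) (v := 11) (by decide) (.cons (u := 11) (v := 4) (by decide) (.cons (u := 4) (v := 19) (by decide) (.cons (u := 19) (v := 3) (by decide) .nil))))))

theorem hb20 : IsCycleEdgeSet 7 (cyc [3, 14, 5, 15, 11, 4, 19]) :=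
  ⟨Gr, 3, wb20, by decide, rfl, by
    simp only [cyc, show wb20.edges = edgesList [3, 14, 5, 15, 11, 4, 19] from by decide]⟩

def wb21 : Gr.Walk 4 4 :=
  .cons (u := 4) (v := 9) (by decide) (.cons (u := 9) (v := 20) (by decide) (.cons (u := 20) (v := 5) (by decide) (.cons (u := 5) (v := 16) (by decide) (.cons (u := 16) (v := 8) (by decide) (.cons (u := 8) (v := 18) (by decide) (.cons (u := 18) (v := 4) (by decide) .nil))))))

theorem hb21 : IsCycleEdgeSet 7 (cyc [4, 9, 20, 5, 16, 8, 18]) :=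
  ⟨Gr, 4, wb21, by decide, rfl, by
    simp only [cyc, show wb21.edges = edgesList [4, 9, 20, 5, 16, 8, 18] from by decide]⟩

def wb22 : Gr.Walk 4 4 :=
  .cons (u := 4) (v := 12) (by decide) (.cons (u := 12) (v := 13) (by decide) (.cons (u := 13) (v := 9) (by decide) (.cons (u := 9) (v := 5) (by decide) (.cons (u := 5) (v := 18) (by decide) (.cons (u := 18) (v := 20) (by decide) (.cons (u := 20) (v := 4) (by decide) .nil))))))

theorem hb22 : IsCycleEdgeSet 7 (cyc [4, 12, 13, 9, 5, 18, 20]) :=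
  ⟨Gr, 4, wb22, by decide, rfl, by
    simp only [cyc, show wb22.edges = edgesList [4, 12, 13, 9, 5, 18, 20] from by decide]⟩

def wb23 : Gr.Walk 4 4 :=
  .cons (u := 4) (v := 14) (by decide) (.cons (u := 14) (v := 20) (by decide) (.cons (u := 20) (v := 19) (by decide) (.cons (u := 19) (v := 6) (by decide) (.cons (u := 6) (v := 7) (by decide) (.cons (u := 7) (v := 16) (by decide) (.cons (u := 16) (v := 4) (by decide) .nil))))))

theorem hb23 : IsCycleEdgeSet 7 (cyc [4, 14, 20, 19, 6, 7, 16]) :=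
  ⟨Gr, 4, wb23, by decide, rfl, by
    simp only [cyc, show wb23.edges = edgesList [4, 14, 20, 19, 6, 7, 16] from by decide]⟩

def wb24 : Gr.Walk 6 6 :=
  .cons (u := 6) (v := 15) (by decide) (.cons (u := 15) (v := 16) (by decide) (.cons (u := 16) (v := 12) (by decide) (.cons (u := 12) (v := 10) (by decide) (.cons (u := 10) (v := 7) (by decide) (.cons (u := 7) (v := 18) (by decide) (.cons (u := 18) (v := 6) (by decide) .nil))))))

theorem hb24 : IsCycleEdgeSet 7 (cyc [6, 15, 16, 12, 10, 7, 18]) :=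
  ⟨Gr, 6, wb24, by decide, rfl, by
    simp only [cyc, show wb24.edges = edgesList [6, 15, 16, 12, 10, 7, 18] from by decide]⟩

def wb25 : Gr.Walk 6 6 :=
  .cons (u := 6) (v := 16) (by decide) (.cons (u := 16) (v := 11) (by decide) (.cons (u := 11) (v := 20) (by decide) (.cons (u := 20) (v := 7) (by decide) (.cons (u := 7) (v := 13) (by decide) (.cons (u := 13) (v := 17) (by decide) (.cons (u := 17) (v := 6) (by decide) .nil))))))

theorem hb25 : IsCycleEdgeSet 7 (cyc [6, 16, 11, 20, 7, 13, 17]) :=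
  ⟨Gr, 6, wb25, by decide, rfl, by
    simp only [cyc, show wb25.edges = edgesList [6, 16, 11, 20, 7, 13, 17] from by decide]⟩

def wb26 : Gr.Walk 8 8 :=
  .cons (u := 8) (v := 9) (by decide) (.cons (u := 9) (v := 16) (by decide) (.cons (u := 16) (v := 14) (by decide) (.cons (u := 14) (v := 17) (by decide) (.cons (u := 17) (v := 11) (by decide) (.cons (u := 11) (v := 13) (by decide) (.cons (u := 13) (v := 8) (by decide) .nil))))))

theorem hb26 : IsCycleEdgeSet 7 (cyc [8, 9, 16, 14, 17, 11, 13]) :=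
  ⟨Gr, 8, wb26, by decide, rfl, by
    simp only [cyc, show wb26.edges = edgesList [8, 9, 16, 14, 17, 11, 13] from by decide]⟩

def cyclesb : List (List (Fin 21)) :=
  [[0, 7, 17, 10, 13, 16, 20],
   [0, 8, 5, 17, 9, 12, 18],
   [0, 9, 14, 1, 17, 4, 15],
   [0, 10, 1, 12, 5, 7, 19],
   [0, 11, 12, 2, 9, 19, 16],
   [0, 12, 8, 14, 10, 18, 13],
   [0, 14, 19, 13, 20, 12, 17],
   [1, 7, 8, 10, 20, 2, 13],
   [1, 8, 11, 3, 12, 14, 18],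
   [1, 9, 10, 4, 13, 6, 20],
   [1, 11, 5, 19, 18, 17, 16],
   [1, 15, 14, 13, 3, 8, 19],
   [2, 7, 15, 10, 11, 6, 14],
   [2, 8, 20, 15, 13, 5, 10],
   [2, 11, 9, 15, 18, 3, 16],
   [2, 15, 12, 7, 14, 11, 19],
   [2, 17, 8, 4, 7, 11, 18],
   [3, 7, 9, 6, 8, 15, 17],
   [3, 9, 18, 16, 10, 19, 15],
   [3, 10, 6, 12, 19, 17, 20],
   [3, 14, 5, 15, 11, 4, 19],
   [4, 9, 20, 5, 16, 8, 18],
   [4, 12, 13, 9, 5, 18, 20],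
   [4, 14, 20, 19, 6, 7, 16],
   [6, 15, 16, 12, 10, 7, 18],
   [6, 16, 11, 20, 7, 13, 17],
   [8, 9, 16, 14, 17, 11, 13]]

lemma hcycsb : ∀ L ∈ cyclesb, IsCycleEdgeSet 7 (cyc L) := by
  intro L hL
  fin_cases hL
  · exact hb0
  · exact hb1
  · exact hb2
  · exact hb3
  · exact hb4
  · exact hb5
  · exact hb6
  · exact hb7
  · exact hb8
  · exact hb9
  · exact hb10
  · exact hb11
  · exact hb12
  · exact hb13
  · exact hb14
  · exact hb15
  · exact hb16
  · exact hb17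
  · exact hb18
  · exact hb19
  · exact hb20
  · exact hb21
  · exact hb22
  · exact hb23
  · exact hb24
  · exact hb25
  · exact hb26

def pNa : List (List ℕ) :=
  [[7, 158, 245, 313, 271, 265, 13],
   [8, 183, 36, 28, 49, 52, 10],
   [9, 72, 75, 54, 55, 293, 20],
   [11, 95, 102, 144, 136, 227, 17],
   [12, 267, 225, 199, 206, 376, 19],
   [14, 119, 114, 209, 356, 331, 15],
   [16, 247, 32, 34, 76, 81, 18],
   [29, 181, 223, 226, 58, 59, 38],
   [30, 208, 124, 113, 155, 157, 31],
   [33, 269, 80, 71, 92, 104, 41],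
   [35, 310, 354, 398, 251, 250, 40],
   [37, 205, 203, 140, 141, 333, 39],
   [50, 178, 229, 166, 164, 332, 57],
   [51, 135, 138, 272, 335, 309, 56],
   [53, 246, 288, 97, 100, 355, 61],
   [60, 375, 290, 202, 177, 188, 62],
   [70, 165, 397, 334, 99, 98, 77],
   [73, 224, 266, 243, 248, 353, 79],
   [74, 221, 222, 96, 91, 167, 83],
   [78, 162, 156, 201, 180, 187, 82],
   [93, 200, 244, 291, 123, 122, 101],
   [94, 115, 117, 268, 142, 145, 103],
   [112, 133, 143, 185, 184, 289, 118],
   [116, 179, 134, 139, 287, 314, 125],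
   [120, 204, 207, 312, 161, 163, 121],
   [137, 249, 186, 182, 311, 377, 146],
   [159, 270, 228, 230, 419, 292, 160]]

def pNb : List (List ℕ) :=
  [[7, 164, 227, 223, 289, 356, 20],
   [8, 113, 122, 206, 201, 270, 18],
   [9, 203, 35, 38, 101, 99, 15],
   [10, 31, 33, 117, 112, 166, 19],
   [11, 243, 54, 51, 208, 355, 16],
   [12, 180, 182, 224, 228, 291, 13],
   [14, 313, 292, 293, 272, 269, 17],
   [28, 155, 178, 230, 62, 55, 34],
   [29, 179, 74, 75, 266, 312, 39],
   [30, 199, 94, 97, 139, 146, 41],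
   [32, 116, 124, 397, 375, 353, 37],
   [36, 309, 287, 76, 71, 187, 40],
   [49, 162, 225, 221, 137, 140, 56],
   [50, 188, 335, 288, 118, 115, 52],
   [53, 200, 204, 333, 81, 79, 58],
   [57, 267, 159, 161, 245, 250, 61],
   [59, 185, 92, 91, 158, 249, 60],
   [70, 156, 135, 134, 183, 332, 80],
   [72, 207, 354, 226, 229, 334, 78],
   [73, 136, 138, 271, 376, 377, 83],
   [77, 119, 120, 246, 95, 103, 82],
   [93, 209, 125, 121, 184, 186, 102],
   [96, 265, 202, 114, 123, 398, 104],
   [98, 314, 419, 145, 133, 163, 100],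
   [141, 331, 268, 222, 157, 165, 144],
   [142, 247, 251, 167, 160, 290, 143],
   [177, 205, 310, 311, 248, 244, 181]]

def Elist : List ℕ :=
  [7, 8, 9, 10, 11, 12, 13, 14, 15, 16, 17, 18, 19, 20, 28, 29, 30, 31, 32, 33, 34, 35, 36, 37, 38, 39, 40, 41, 49, 50, 51, 52, 53, 54, 55, 56, 57, 58, 59, 60, 61, 62, 70, 71, 72, 73, 74, 75, 76, 77, 78, 79, 80, 81, 82, 83, 91, 92, 93, 94, 95, 96, 97, 98, 99, 100, 101, 102, 103, 104, 112, 113, 114, 115, 116, 117, 118, 119, 120, 121, 122, 123, 124, 125, 133, 134, 135, 136, 137, 138, 139, 140, 141, 142, 143, 144, 145, 146, 155, 156, 157, 158, 159, 160, 161, 162, 163, 164, 165, 166, 167, 177, 178, 179, 180, 181, 182, 183, 184, 185, 186, 187, 188, 199, 200, 201, 202, 203, 204, 205, 206, 207, 208, 209, 221, 222, 223, 224, 225, 226, 227, 228, 229, 230, 243, 244, 245, 246, 247, 248, 249, 250, 251, 265, 266, 267, 268, 269, 270, 271, 272, 287, 288, 289, 290, 291, 292, 293, 309, 310, 311, 312,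 313, 314, 331, 332, 333, 334, 335, 353, 354, 355, 356, 375, 376, 377, 397, 398, 419]


set_option maxRecDepth 100000 in
lemma dpa : pNa = cyclesa.map (fun L => pairsN (L.map Fin.val)) := by decide

set_option maxRecDepth 100000 in
lemma dpb : pNb = cyclesb.map (fun L => pairsN (L.map Fin.val)) := by decide

set_option maxRecDepth 100000 in
lemma dcodea : ∀ l ∈ pNa, ∀ m ∈ l, m / 21 ≠ m % 21 ∧ 7 ≤ m % 21 := by decide

set_option maxRecDepth 100000 in
lemma dcodeb : ∀ l ∈ pNb, ∀ m ∈ l, m / 21 ≠ m % 21 ∧ 7 ≤ m % 21 := by decide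

set_option maxRecDepth 100000 in
lemma dnda : ∀ l ∈ pNa, l.Nodup := by decide

set_option maxRecDepth 100000 in
lemma dndb : ∀ l ∈ pNb, l.Nodup := by decide

set_option maxRecDepth 100000 in
set_option maxHeartbeats 2000000 in
lemma dsorta : ∀ m ∈ Elist, pNa.flatten.count m = 1 := by decide

set_option maxRecDepth 100000 in
set_option maxHeartbeats 2000000 in
lemma dsortb : ∀ m ∈ Elist, pNb.flatten.count m = 1 := by decide

set_option maxRecDepth 100000 in
lemma drefE : refE = Elist := by decide

set_option maxRecDepth 100000 in
set_option maxHeartbeats 2000000 in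
lemma dkey : ∀ l1 ∈ pNa, ∀ l2 ∈ pNb, l1.countP (fun m => decide (m ∈ l2)) ≤ 1 := by decide

theorem orthogonal_seven_cycle_decompositions_K21_minus_K7 :
    ∃ D₁ D₂ : Set (Set (Sym2 (Fin 21))),
      IsCycleDecomposition (SimpleGraph.fromRel (fun x y : Fin 21 => ¬((x : ℕ) < 7 ∧ (y : ℕ) < 7))) 7 D₁ ∧
      IsCycleDecomposition (SimpleGraph.fromRel (fun x y : Fin 21 => ¬((x : ℕ) < 7 ∧ (y : ℕ) < 7))) 7 D₂ ∧
      OrthogonalDecompositions D₁ D₂ :=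
  ⟨{C | ∃ L ∈ cyclesa, C = cyc L}, {C | ∃ L ∈ cyclesb, C = cyc L},
    decompN cyclesa pNa Elist dpa hcycsa dcodea dnda dsorta drefE,
    decompN cyclesb pNb Elist dpb hcycsb dcodeb dndb dsortb drefE,
    orthoN cyclesa cyclesb pNa pNb dpa dpb dkey⟩
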